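/- Let G be a connected graph with linear order on vertices and let v dominate w (N(v)\{w} ⊇ N(w)\{v}, with strict containment or v > w). Suppose T is a minimum-depth elimination tree of G in which some vertex is dominated by one of its descendants. Then there exists a minimum-depth elimination tree T' of G whose score is strictly greater than the score of T, where the score of a tree is the lexicographic minimum of (depth of u, u) over all vertices u dominated by a descendant, and (∞,∞) if no such vertex exists. -/

import Mathlib

open scoped Classical

/-- `nbhd G S` is the set `N(S)` of vertices outside `S` adjacent to some vertex of `S`. -/
def nbhd {V : Type*} (G : SimpleGraph V) (S : Set V) : Set V :=
  {u | u ∉ S ∧ ∃ s ∈ S, G.Adj u s}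

/-- `compOf G A c` is the vertex set of the connected component of `c` in `G[A]`. -/
def compOf {V : Type*} (G : SimpleGraph V) (A : Set V) (c : V) : Set V :=
  {x | ∃ (hx : x ∈ A) (hc : c ∈ A), (G.induce A).Reachable ⟨x, hx⟩ ⟨c, hc⟩}

/-- `IsElimTree G S r anc` : `anc` is the (reflexive) ancestor relation of an
elimination tree of `G[S]` with root `r`, following the recursive definition:
a one-vertex graph is its own elimination tree; otherwise the root `r` is made
the parent of the roots of elimination trees of the components of `G[S] - r`. -/
inductive IsElimTree {V : Type*} (G : SimpleGraph V) : Set V → V → (V → V → Prop) → Prop where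
  | single (v : V) : IsElimTree G {v} v (fun a b => a = v ∧ b = v)
  | node (S : Set V) (r : V) (hr : r ∈ S) (hS : S ≠ {r})
      (root : V → V) (sub : V → V → V → Prop)
      (hsub : ∀ c ∈ S \ {r}, IsElimTree G (compOf G (S \ {r}) c) (root c) (sub c))
      (hcong : ∀ c ∈ S \ {r}, ∀ c' ∈ S \ {r},
        compOf G (S \ {r}) c = compOf G (S \ {r}) c' → root c = root c' ∧ sub c = sub c')
      (anc : V → V → Prop)
      (hanc : ∀ a b, anc a b ↔ (a = r ∧ b ∈ S) ∨ ∃ c ∈ S \ {r}, sub c a b) :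
      IsElimTree G S r anc

/-- The depth (maximum number of vertices on a root-to-leaf path) of a rooted forest
on vertex set `S`, given by its reflexive ancestor relation `anc`. -/
noncomputable def ancDepth {V : Type*} (anc : V → V → Prop) (S : Set V) : ℕ :=
  sSup ((fun b => Set.ncard {a | anc a b}) '' S)

/-- A treedepth decomposition of `G`: a rooted forest on the vertex set of `G`
(given by its reflexive ancestor partial order, in which the set of ancestors of any
vertex is a chain) such that every edge of `G` joins an ancestor-descendant pair. -/
structure TDDecomp {V : Type*} (G : SimpleGraph V) where
  anc : V → V → Prop
  refl : ∀ v, anc v v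
  trans : ∀ a b c, anc a b → anc b c → anc a c
  antisymm : ∀ a b, anc a b → anc b a → a = b
  chain : ∀ a b v, anc a v → anc b v → anc a b ∨ anc b a
  covers : ∀ u v, G.Adj u v → anc u v ∨ anc v u

/-- Depth of a treedepth decomposition. -/
noncomputable def TDDecomp.depth {V : Type*} {G : SimpleGraph V} (F : TDDecomp G) : ℕ :=
  ancDepth F.anc Set.univ

/-- Treedepth of `G`: minimum depth of a treedepth decomposition of `G`. -/
noncomputable def treedepth {V : Type*} (G : SimpleGraph V) : ℕ :=
  sInf {d | ∃ F : TDDecomp G, F.depth = d}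

/-- `v` dominates `w`. -/
def Dominates {V : Type*} [LinearOrder V] (G : SimpleGraph V) (v w : V) : Prop :=
  v ≠ w ∧ ((G.neighborSet w \ {v}) ⊂ (G.neighborSet v \ {w}) ∨
    (G.neighborSet v \ {w} = G.neighborSet w \ {v} ∧ w < v))

/-- The score of an elimination tree (given by its ancestor relation `anc`):
the lexicographically least pair `(depth of u, u)` over vertices `u` dominated by
one of their descendants, and `⊤ = (∞,∞)` if no such vertex exists. -/
noncomputable def score {V : Type*} [Fintype V] [LinearOrder V] (G : SimpleGraph V)
    (anc : V → V → Prop) : WithTop (Lex (ℕ × V)) :=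
  Finset.min ((Finset.univ.filter
      (fun u => ∃ w, anc u w ∧ Dominates G w u)).image
    (fun u => toLex (Set.ncard {a | anc a u}, u)))
open SimpleGraph
namespace ETAux
variable {V : Type*} {G : SimpleGraph V}

/-- connectivity of a vertex set inside `G`. -/
def SetConn (G : SimpleGraph V) (A : Set V) : Prop :=
  ∀ x (hx : x ∈ A) y (hy : y ∈ A), (G.induce A).Reachable ⟨x, hx⟩ ⟨y, hy⟩

lemma compOf_subset {A : Set V} {c : V} : compOf G A c ⊆ A := by
  rintro x ⟨hx, -, -⟩; exact hx

lemma mem_compOf_self {A : Set V} {c : V} (hc : c ∈ A) : c ∈ compOf G A c :=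
  ⟨hc, hc, Reachable.refl _⟩

lemma reachable_induce_mono {A B : Set V} (hAB : A ⊆ B) {x y : V} (hx : x ∈ A) (hy : y ∈ A)
    (h : (G.induce A).Reachable ⟨x, hx⟩ ⟨y, hy⟩) :
    (G.induce B).Reachable ⟨x, hAB hx⟩ ⟨y, hAB hy⟩ := by
  have := h.map (SimpleGraph.induceHomOfLE G hAB).toHom
  convert this using 2 <;> simp [SimpleGraph.induceHomOfLE]

lemma compOf_eq_of_mem {A : Set V} {c x : V} (hx : x ∈ compOf G A c) :
    compOf G A x = compOf G A c := by
  obtain ⟨hxA, hcA, hreach⟩ := hx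
  ext z
  constructor
  · rintro ⟨hz, h2, hr⟩; exact ⟨hz, hcA, hr.trans hreach⟩
  · rintro ⟨hz, h2, hr⟩; exact ⟨hz, hxA, hr.trans hreach.symm⟩

lemma adj_mem_compOf {A : Set V} {c x y : V} (hx : x ∈ compOf G A c) (hy : y ∈ A)
    (hadj : G.Adj y x) : y ∈ compOf G A c := by
  obtain ⟨hxA, hcA, hreach⟩ := hx
  refine ⟨hy, hcA, Reachable.trans ?_ hreach⟩
  exact SimpleGraph.Adj.reachable (by simpa using hadj)

lemma subset_compOf {A B : Set V} {a : V} (hB : SetConn G B) (hBA : B ⊆ A) (ha : a ∈ B) :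
    B ⊆ compOf G A a := fun x hx =>
  ⟨hBA hx, hBA ha, reachable_induce_mono hBA hx ha (hB x hx a ha)⟩

lemma compOf_eq_self_of_conn {A : Set V} {c : V} (hA : SetConn G A) (hc : c ∈ A) :
    compOf G A c = A :=
  le_antisymm compOf_subset (subset_compOf hA le_rfl hc)

/-- transfer a walk whose support lies in `B` to the induced graph on `B`. -/
lemma reachable_of_walk_support {A B : Set V} (hBA : B ⊆ A) :
    ∀ {p q : {z // z ∈ A}} (w : (G.induce A).Walk p q),
      (∀ z ∈ w.support, z.val ∈ B) → (hp : p.val ∈ B) → (hq : q.val ∈ B) →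
      (G.induce B).Reachable ⟨p.val, hp⟩ ⟨q.val, hq⟩ := by
  intro p q w
  induction w with
  | nil => intro _ hp _; exact Reachable.refl _
  | cons h w ih =>
    rename_i a b c
    intro hsupp hp hq
    have hb : b.val ∈ B := hsupp b (by simp [SimpleGraph.Walk.support_cons])
    have h1 : (G.induce B).Adj ⟨a.val, hp⟩ ⟨b.val, hb⟩ := by
      simpa using (by simpa using h : G.Adj a.val b.val)
    refine (h1.reachable).trans (ih ?_ hb hq)
    intro z hz; exact hsupp z (by simp [SimpleGraph.Walk.support_cons, hz])

lemma setConn_compOf {A : Set V} {c : V} : SetConn G (compOf G A c) := by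
  intro x hx y hy
  obtain ⟨hxA, hcA, hrx⟩ := hx
  obtain ⟨hyA, -, hry⟩ := hy
  obtain ⟨w⟩ := hrx.trans hry.symm
  have hsupp : ∀ z ∈ w.support, z.val ∈ compOf G A c := by
    intro z hz
    have hwz : (G.induce A).Walk z ⟨y, hyA⟩ := w.dropUntil z hz
    exact ⟨z.2, hcA, (Reachable.trans ⟨hwz⟩ hry : _)⟩
  exact reachable_of_walk_support compOf_subset w hsupp ⟨hxA, hcA, hrx⟩ ⟨hyA, hcA, hry⟩

lemma setConn_singleton (v : V) : SetConn G {v} := by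
  intro x hx y hy
  rcases hx with rfl
  rcases hy with rfl
  exact Reachable.refl _

lemma setConn_univ (hG : G.Connected) : SetConn G Set.univ := by
  intro x hx y hy
  have h := (hG x y).map (G.induceUnivIso).symm.toHom
  convert h using 2 <;> simp [SimpleGraph.induceUnivIso]

/-- closure under adjacency propagates along connectivity. -/
lemma eq_of_adj_closed {S U : Set V} (hconn : SetConn G S) (hUS : U ⊆ S)
    (hcl : ∀ x ∈ U, ∀ y ∈ S, G.Adj x y → y ∈ U) {m : V} (hm : m ∈ U) : U = S := by
  refine le_antisymm hUS fun z hz => ?_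
  obtain ⟨w⟩ := hconn m (hUS hm) z hz
  clear hconn
  have : ∀ {p q : {z // z ∈ S}} (w : (G.induce S).Walk p q), p.val ∈ U → q.val ∈ U := by
    intro p q w
    induction w with
    | nil => exact id
    | cons h w ih =>
      rename_i a b c
      intro ha
      exact ih (hcl a.val ha b.val b.2 (by simpa using h))
  exact this w hm

/-- the component of `x` in `A \ K` can be computed inside the component of `x` in `A`. -/
lemma compOf_diff_eq {A K : Set V} {x : V} :
    compOf G (A \ K) x = compOf G (compOf G A x \ K) x := by
  by_cases hx : x ∈ A \ K
  · have hsub : compOf G A x \ K ⊆ A \ K := fun z hz => ⟨compOf_subset hz.1, hz.2⟩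
    apply le_antisymm
    · refine subset_compOf setConn_compOf ?_ (mem_compOf_self hx)
      rintro z ⟨hzA, hxA, hr⟩
      exact ⟨⟨hzA.1, hx.1, reachable_induce_mono Set.diff_subset _ _ hr⟩, hzA.2⟩
    · exact subset_compOf setConn_compOf (fun z hz => hsub (compOf_subset hz))
        (mem_compOf_self ⟨mem_compOf_self hx.1, hx.2⟩)
  · have h1 : compOf G (A \ K) x = ∅ := by
      ext z; simp only [compOf, Set.mem_setOf_eq, Set.mem_empty_iff_false, iff_false]
      rintro ⟨-, hc, -⟩; exact hx hc
    have hx2 : x ∉ compOf G A x \ K := by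
      intro h
      exact hx ⟨compOf_subset h.1, h.2⟩
    have h2 : compOf G (compOf G A x \ K) x = ∅ := by
      ext z; simp only [compOf, Set.mem_setOf_eq, Set.mem_empty_iff_false, iff_false]
      rintro ⟨-, hc, -⟩; exact hx2 hc
    rw [h1, h2]

end ETAux
-- PART2: FProps, Fmin
namespace ETAux
variable {V : Type*} {G : SimpleGraph V}

/-- partial-order-with-chain-and-cover properties of a relation, relativized to `S`. -/
structure FProps (G : SimpleGraph V) (F : V → V → Prop) (S : Set V) : Prop where
  refl : ∀ a ∈ S, F a a
  trans : ∀ a ∈ S, ∀ b ∈ S, ∀ c ∈ S, F a b → F b c → F a c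
  antisymm : ∀ a ∈ S, ∀ b ∈ S, F a b → F b a → a = b
  chain : ∀ a ∈ S, ∀ b ∈ S, ∀ v ∈ S, F a v → F b v → F a b ∨ F b a
  covers : ∀ x ∈ S, ∀ y ∈ S, G.Adj x y → F x y ∨ F y x

lemma FProps.mono {F : V → V → Prop} {S C : Set V} (h : FProps G F S) (hCS : C ⊆ S) :
    FProps G F C where
  refl a ha := h.refl a (hCS ha)
  trans a ha b hb c hc := h.trans a (hCS ha) b (hCS hb) c (hCS hc)
  antisymm a ha b hb := h.antisymm a (hCS ha) b (hCS hb)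
  chain a ha b hb v hv := h.chain a (hCS ha) b (hCS hb) v (hCS hv)
  covers x hx y hy := h.covers x (hCS hx) y (hCS hy)

/-- existence of a minimum for a connected set. -/
lemma exists_min [Finite V] {F : V → V → Prop} {S : Set V} (hP : FProps G F S)
    (hconn : SetConn G S) (hne : S.Nonempty) : ∃ m ∈ S, ∀ x ∈ S, F m x := by
  classical
  -- first get a minimal element
  obtain ⟨m, hmS, hmax⟩ := Set.Finite.exists_maximalFor
    (fun m => Set.ncard {x ∈ S | F m x}) S (Set.toFinite S) hne
  have hminimal : ∀ y ∈ S, y ≠ m → ¬ F y m := by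
    intro y hyS hym hFym
    have hsub : {x ∈ S | F m x} ⊆ {x ∈ S | F y x} := by
      rintro x ⟨hxS, hFx⟩
      exact ⟨hxS, hP.trans y hyS m hmS x hxS hFym hFx⟩
    have hyn : y ∉ {x ∈ S | F m x} := by
      rintro ⟨-, hFy⟩
      exact hym (hP.antisymm y hyS m hmS hFym hFy)
    have hss : {x ∈ S | F m x} ⊂ {x ∈ S | F y x} :=
      ⟨hsub, fun hrev => hyn (hrev ⟨hyS, hP.refl y hyS⟩)⟩
    have hlt := Set.ncard_lt_ncard hss (Set.toFinite _)
    exact absurd (hmax hyS (le_of_lt hlt)) (not_le.2 hlt)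
  refine ⟨m, hmS, ?_⟩
  have hU : {x ∈ S | F m x} = S := by
    apply eq_of_adj_closed hconn (fun x hx => hx.1) ?_ (⟨hmS, hP.refl m hmS⟩ :
      m ∈ {x ∈ S | F m x})
    rintro x ⟨hxS, hFmx⟩ y hyS hadj
    refine ⟨hyS, ?_⟩
    rcases hP.covers x hxS y hyS hadj with h | h
    · exact hP.trans m hmS x hxS y hyS hFmx h
    · rcases hP.chain m hmS y hyS x hxS hFmx h with h2 | h2
      · exact h2
      · by_cases hym : y = m
        · subst hym; exact hP.refl _ hmS
        · exact absurd h2 (hminimal y hyS hym)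
  intro x hx
  rw [← hU] at hx
  exact hx.2

/-- The `F`-minimum of `S` (well-defined when it exists). -/
noncomputable def Fmin [Nonempty V] (F : V → V → Prop) (S : Set V) : V :=
  Classical.epsilon fun m => m ∈ S ∧ ∀ x ∈ S, F m x

lemma Fmin_spec [Nonempty V] {F : V → V → Prop} {S : Set V}
    (h : ∃ m ∈ S, ∀ x ∈ S, F m x) :
    Fmin F S ∈ S ∧ ∀ x ∈ S, F (Fmin F S) x := by
  have := Classical.epsilon_spec (p := fun m => m ∈ S ∧ ∀ x ∈ S, F m x)
    (by obtain ⟨m, h1, h2⟩ := h; exact ⟨m, h1, h2⟩)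
  exact this

end ETAux
-- PART3: basic properties of elimination trees
namespace ETAux
variable {V : Type*} {G : SimpleGraph V}

lemma et_mem {S : Set V} {r : V} {anc : V → V → Prop} (h : IsElimTree G S r anc) :
    ∀ a b, anc a b → a ∈ S ∧ b ∈ S := by
  induction h with
  | single v => rintro a b ⟨rfl, rfl⟩; exact ⟨rfl, rfl⟩
  | node S r hr hS root sub hsub hcong anc hanc ih =>
    intro a b hab
    rcases (hanc a b).1 hab with ⟨rfl, hb⟩ | ⟨c, hc, hsc⟩
    · exact ⟨hr, hb⟩
    · have := ih c hc a b hsc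
      exact ⟨(compOf_subset this.1).1, (compOf_subset this.2).1⟩

lemma et_refl {S : Set V} {r : V} {anc : V → V → Prop} (h : IsElimTree G S r anc) :
    ∀ a ∈ S, anc a a := by
  induction h with
  | single v => rintro a rfl; exact ⟨rfl, rfl⟩
  | node S r hr hS root sub hsub hcong anc hanc ih =>
    intro a ha
    by_cases har : a = r
    · exact (hanc a a).2 (Or.inl ⟨har, ha⟩)
    · exact (hanc a a).2 (Or.inr ⟨a, ⟨ha, har⟩,
        ih a ⟨ha, har⟩ a (mem_compOf_self ⟨ha, har⟩)⟩)

lemma et_root_mem {S : Set V} {r : V} {anc : V → V → Prop} (h : IsElimTree G S r anc) :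
    r ∈ S := by
  cases h with
  | single v => rfl
  | node S r hr hS root sub hsub hcong anc hanc => exact hr

lemma et_anc_root {S : Set V} {r : V} {anc : V → V → Prop} (h : IsElimTree G S r anc) :
    ∀ b, anc r b ↔ b ∈ S := by
  intro b
  constructor
  · intro hb; exact (et_mem h r b hb).2
  · intro hb
    cases h with
    | single v =>
      rcases hb with rfl; exact ⟨rfl, rfl⟩
    | node S r hr hS root sub hsub hcong anc hanc =>
      exact (hanc r b).2 (Or.inl ⟨rfl, hb⟩)

lemma et_anc_to_root {S : Set V} {r : V} {anc : V → V → Prop} (h : IsElimTree G S r anc) :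
    ∀ a, anc a r → a = r := by
  intro a ha
  cases h with
  | single v => exact ha.1
  | node S r hr hS root sub hsub hcong anc hanc =>
    rcases (hanc a r).1 ha with ⟨rfl, -⟩ | ⟨c, hc, hsc⟩
    · rfl
    · have := et_mem (hsub c hc) a r hsc
      exact absurd (compOf_subset this.2).2 (by simp)

lemma et_trans {S : Set V} {r : V} {anc : V → V → Prop} (h : IsElimTree G S r anc) :
    ∀ a b c, anc a b → anc b c → anc a c := by
  induction h with
  | single v => rintro a b c ⟨rfl, -⟩ ⟨-, rfl⟩; exact ⟨rfl, rfl⟩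
  | node S r hr hS root sub hsub hcong anc hanc ih =>
    intro a b c hab hbc
    rcases (hanc a b).1 hab with ⟨rfl, hb⟩ | ⟨d, hd, hsd⟩
    · exact (hanc a c).2 (Or.inl ⟨rfl, (et_mem (by
        exact IsElimTree.node S a hr hS root sub hsub hcong anc hanc) b c hbc).2⟩)
    · rcases (hanc b c).1 hbc with ⟨rfl, hc⟩ | ⟨e, he, hse⟩
      · -- b = r but b is in a component of S \ {r}: contradiction
        have := et_mem (hsub d hd) a b hsd
        exact absurd (compOf_subset this.2).2 (by simp)
      · -- b ∈ comp d and b ∈ comp e, so comp d = comp e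
        have hbd := (et_mem (hsub d hd) a b hsd).2
        have hbe := (et_mem (hsub e he) b c hse).1
        have hde : compOf G (S \ {r}) d = compOf G (S \ {r}) e := by
          rw [← compOf_eq_of_mem hbd, ← compOf_eq_of_mem hbe]
        have hsubeq := (hcong d hd e he hde).2
        rw [← hsubeq] at hse
        exact (hanc a c).2 (Or.inr ⟨d, hd, ih d hd a b c hsd hse⟩)

lemma et_antisymm {S : Set V} {r : V} {anc : V → V → Prop} (h : IsElimTree G S r anc) :
    ∀ a b, anc a b → anc b a → a = b := by
  induction h with
  | single v => rintro a b ⟨rfl, -⟩ ⟨rfl, -⟩; rfl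
  | node S r hr hS root sub hsub hcong anc hanc ih =>
    intro a b hab hba
    rcases (hanc a b).1 hab with ⟨rfl, hb⟩ | ⟨d, hd, hsd⟩
    · exact (et_anc_to_root
        (IsElimTree.node S a hr hS root sub hsub hcong anc hanc) b hba).symm
    · rcases (hanc b a).1 hba with ⟨rfl, ha⟩ | ⟨e, he, hse⟩
      · have := et_mem (hsub d hd) a b hsd
        exact absurd (compOf_subset this.2).2 (by simp)
      · have hbd := (et_mem (hsub d hd) a b hsd).2
        have hbe := (et_mem (hsub e he) b a hse).1
        have hde : compOf G (S \ {r}) d = compOf G (S \ {r}) e := by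
          rw [← compOf_eq_of_mem hbd, ← compOf_eq_of_mem hbe]
        rw [← (hcong d hd e he hde).2] at hse
        exact ih d hd a b hsd hse

lemma et_chain {S : Set V} {r : V} {anc : V → V → Prop} (h : IsElimTree G S r anc) :
    ∀ a b v, anc a v → anc b v → anc a b ∨ anc b a := by
  induction h with
  | single v => rintro a b w ⟨rfl, -⟩ ⟨rfl, -⟩; exact Or.inl ⟨rfl, rfl⟩
  | node S r hr hS root sub hsub hcong anc hanc ih =>
    intro a b v hav hbv
    have hT := IsElimTree.node S r hr hS root sub hsub hcong anc hanc
    rcases (hanc a v).1 hav with ⟨rfl, hv⟩ | ⟨d, hd, hsd⟩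
    · exact Or.inl ((et_anc_root hT b).2 (et_mem hT b v hbv).1)
    · rcases (hanc b v).1 hbv with ⟨rfl, hv⟩ | ⟨e, he, hse⟩
      · exact Or.inr ((et_anc_root hT a).2 (et_mem hT a v hav).1)
      · have hvd := (et_mem (hsub d hd) a v hsd).2
        have hve := (et_mem (hsub e he) b v hse).2
        have hde : compOf G (S \ {r}) d = compOf G (S \ {r}) e := by
          rw [← compOf_eq_of_mem hvd, ← compOf_eq_of_mem hve]
        rw [← (hcong d hd e he hde).2] at hse
        rcases ih d hd a b v hsd hse with h1 | h1
        · exact Or.inl ((hanc a b).2 (Or.inr ⟨d, hd, h1⟩))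
        · exact Or.inr ((hanc b a).2 (Or.inr ⟨d, hd, h1⟩))

lemma et_covers {S : Set V} {r : V} {anc : V → V → Prop} (h : IsElimTree G S r anc) :
    ∀ x ∈ S, ∀ y ∈ S, G.Adj x y → anc x y ∨ anc y x := by
  induction h with
  | single v =>
    rintro x rfl y rfl hadj
    exact absurd rfl hadj.ne
  | node S r hr hS root sub hsub hcong anc hanc ih =>
    intro x hx y hy hadj
    have hT := IsElimTree.node S r hr hS root sub hsub hcong anc hanc
    by_cases hxr : x = r
    · subst hxr; exact Or.inl ((et_anc_root hT y).2 hy)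
    by_cases hyr : y = r
    · subst hyr; exact Or.inr ((et_anc_root hT x).2 hx)
    have hyx : y ∈ compOf G (S \ {r}) x :=
      adj_mem_compOf (mem_compOf_self ⟨hx, hxr⟩) ⟨hy, hyr⟩ hadj.symm
    rcases ih x ⟨hx, hxr⟩ x (mem_compOf_self ⟨hx, hxr⟩) y hyx hadj with h1 | h1
    · exact Or.inl ((hanc x y).2 (Or.inr ⟨x, ⟨hx, hxr⟩, h1⟩))
    · exact Or.inr ((hanc y x).2 (Or.inr ⟨x, ⟨hx, hxr⟩, h1⟩))

lemma et_fprops {S : Set V} {r : V} {anc : V → V → Prop} (h : IsElimTree G S r anc) :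
    FProps G anc S where
  refl := et_refl h
  trans a _ b _ c _ := et_trans h a b c
  antisymm a _ b _ := et_antisymm h a b
  chain a _ b _ v _ := et_chain h a b v
  covers := et_covers h

end ETAux
-- PART4: in an elimination tree, the component of x after deleting its strict
-- ancestors is exactly its descendant cone.
namespace ETAux
variable {V : Type*} {G : SimpleGraph V}

lemma et_cone {S : Set V} {r : V} {anc : V → V → Prop} (h : IsElimTree G S r anc) :
    SetConn G S → ∀ x ∈ S,
      compOf G (S \ {a | anc a x ∧ a ≠ x}) x = {b | anc x b} := by
  induction h with
  | single v =>
    rintro hconn x rfl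
    have h1 : {a | (a = x ∧ x = x) ∧ a ≠ x} = (∅ : Set V) := by
      ext a; simp +contextual
    have h2 : ({x} : Set V) \ {a | (a = x ∧ x = x) ∧ a ≠ x} = {x} := by
      rw [h1, Set.diff_empty]
    rw [h2, compOf_eq_self_of_conn (setConn_singleton x) rfl]
    ext b; simp +contextual [eq_comm]
  | node S r hr hS root sub hsub hcong anc hanc ih =>
    intro hconn x hx
    have hT := IsElimTree.node S r hr hS root sub hsub hcong anc hanc
    by_cases hxr : x = r
    · subst hxr
      have h1 : {a | anc a x ∧ a ≠ x} = (∅ : Set V) := by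
        ext a
        simp only [Set.mem_setOf_eq, Set.mem_empty_iff_false, iff_false, not_and]
        intro ha h2; exact h2 (et_anc_to_root hT a ha)
      rw [h1, Set.diff_empty, compOf_eq_self_of_conn hconn hx]
      ext b
      simp only [Set.mem_setOf_eq]
      exact (et_anc_root hT b).symm
    · have hxm : x ∈ S \ {r} := ⟨hx, hxr⟩
      have hxC : x ∈ compOf G (S \ {r}) x := mem_compOf_self hxm
      have hsubeq : ∀ c ∈ S \ {r}, x ∈ compOf G (S \ {r}) c → sub c = sub x := by
        intro c hc hxc
        exact (hcong c hc x hxm (compOf_eq_of_mem hxc).symm).2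
      have claim1 : {a | anc a x ∧ a ≠ x} = {r} ∪ {a | sub x a x ∧ a ≠ x} := by
        ext a
        simp only [Set.mem_setOf_eq, Set.mem_union, Set.mem_singleton_iff]
        constructor
        · rintro ⟨ha, hax⟩
          rcases (hanc a x).1 ha with ⟨rfl, -⟩ | ⟨c, hc, hsc⟩
          · exact Or.inl rfl
          · have hxc := (et_mem (hsub c hc) a x hsc).2
            rw [hsubeq c hc hxc] at hsc
            exact Or.inr ⟨hsc, hax⟩
        · rintro (rfl | ⟨hsc, hax⟩)
          · exact ⟨(et_anc_root hT x).2 hx, fun h => hxr h.symm⟩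
          · exact ⟨(hanc a x).2 (Or.inr ⟨x, hxm, hsc⟩), hax⟩
      have claim2 : {b | anc x b} = {b | sub x x b} := by
        ext b
        simp only [Set.mem_setOf_eq]
        constructor
        · intro hb
          rcases (hanc x b).1 hb with ⟨rfl, -⟩ | ⟨c, hc, hsc⟩
          · exact absurd rfl hxr
          · have hxc := (et_mem (hsub c hc) x b hsc).1
            rw [hsubeq c hc hxc] at hsc
            exact hsc
        · intro hb
          exact (hanc x b).2 (Or.inr ⟨x, hxm, hb⟩)
      have claim3 : S \ {a | anc a x ∧ a ≠ x} =
          (S \ {r}) \ {a | sub x a x ∧ a ≠ x} := by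
        rw [claim1]
        ext a
        simp only [Set.mem_diff, Set.mem_union, Set.mem_singleton_iff, Set.mem_setOf_eq]
        tauto
      rw [claim3, compOf_diff_eq, ih x hxm setConn_compOf x hxC, claim2]
end ETAux
-- PART5: compression of a treedepth decomposition into an elimination tree
namespace ETAux
variable {V : Type*} {G : SimpleGraph V}

/-- the ancestor relation of the elimination tree obtained by compressing `F`. -/
def cAnc (F : V → V → Prop) (S : Set V) (a b : V) : Prop :=
  a ∈ S ∧ F a b ∧ b ∈ compOf G (S \ {x | x ∈ S ∧ F x a ∧ x ≠ a}) a

lemma compress_aux [Finite V] [Nonempty V] {F : V → V → Prop} :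
    ∀ (n : ℕ) (S : Set V), S.ncard ≤ n → S.Nonempty → SetConn G S → FProps G F S →
      IsElimTree G S (Fmin F S) (cAnc (G := G) F S) := by
  intro n
  induction n with
  | zero =>
    intro S hcard hne
    have := Set.ncard_pos (Set.toFinite S) |>.2 hne
    omega
  | succ n ih =>
    intro S hcard hne hconn hP
    obtain ⟨hr, hrmin⟩ := Fmin_spec (exists_min hP hconn hne)
    set r := Fmin F S with hrdef
    by_cases hS : S = {r}
    · have heq : cAnc (G := G) F S = (fun a b => a = r ∧ b = r) := by
        funext a b
        apply propext
        constructor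
        · rintro ⟨haS, hFab, hbcomp⟩
          have hbS := (compOf_subset hbcomp).1
          rw [hS] at haS hbS
          exact ⟨haS, hbS⟩
        · rintro ⟨ha', hb'⟩
          rw [ha', hb']
          show r ∈ S ∧ F r r ∧ r ∈ compOf G (S \ {x | x ∈ S ∧ F x r ∧ x ≠ r}) r
          have hK : {x | x ∈ S ∧ F x r ∧ x ≠ r} = (∅ : Set V) := by
            ext x
            simp only [Set.mem_setOf_eq, Set.mem_empty_iff_false, iff_false, not_and]
            intro hxS hF hne'
            exact hne' (hP.antisymm x hxS r hr hF (hrmin x hxS))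
          rw [hK, Set.diff_empty]
          exact ⟨hr, hP.refl r hr, mem_compOf_self hr⟩
      rw [heq, hS]
      exact IsElimTree.single r
    · have key : ∀ a ∈ S \ {r},
          compOf G (S \ {x | x ∈ S ∧ F x a ∧ x ≠ a}) a =
          compOf G (compOf G (S \ {r}) a \
            {x | x ∈ compOf G (S \ {r}) a ∧ F x a ∧ x ≠ a}) a := by
        intro a ha
        have hrK : r ∈ {x | x ∈ S ∧ F x a ∧ x ≠ a} :=
          ⟨hr, hrmin a ha.1, fun h => ha.2 h.symm⟩
        have h1 : S \ {x | x ∈ S ∧ F x a ∧ x ≠ a} =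
            (S \ {r}) \ {x | x ∈ S ∧ F x a ∧ x ≠ a} := by
          ext z
          simp only [Set.mem_diff, Set.mem_singleton_iff, Set.mem_setOf_eq]
          constructor
          · rintro ⟨hz1, hz2⟩
            exact ⟨⟨hz1, fun h => hz2 (h ▸ hrK)⟩, hz2⟩
          · rintro ⟨⟨hz1, -⟩, hz2⟩; exact ⟨hz1, hz2⟩
        rw [h1, compOf_diff_eq]
        have h2 : compOf G (S \ {r}) a \ {x | x ∈ S ∧ F x a ∧ x ≠ a} =
            compOf G (S \ {r}) a \
              {x | x ∈ compOf G (S \ {r}) a ∧ F x a ∧ x ≠ a} := by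
          ext z
          simp only [Set.mem_diff, Set.mem_setOf_eq]
          constructor
          · rintro ⟨hz1, hz2⟩
            exact ⟨hz1, fun h => hz2 ⟨(compOf_subset hz1).1, h.2⟩⟩
          · rintro ⟨hz1, hz2⟩
            exact ⟨hz1, fun h => hz2 ⟨hz1, h.2.1, h.2.2⟩⟩
        rw [h2]
      refine IsElimTree.node S r hr hS
        (fun c => Fmin F (compOf G (S \ {r}) c))
        (fun c => cAnc (G := G) F (compOf G (S \ {r}) c)) ?_ ?_ _ ?_
      · -- hsub
        intro c hc
        have hCS : compOf G (S \ {r}) c ⊆ S :=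
          compOf_subset.trans Set.diff_subset
        have hlt : (compOf G (S \ {r}) c).ncard < S.ncard := by
          apply Set.ncard_lt_ncard _ (Set.toFinite S)
          exact ⟨hCS, fun hrev => (compOf_subset (hrev hr)).2 rfl⟩
        exact ih _ (by omega) ⟨c, mem_compOf_self hc⟩ setConn_compOf (hP.mono hCS)
      · -- hcong
        intro c hc c' hc' heq
        exact ⟨congrArg _ heq, congrArg _ heq⟩
      · -- hanc
        intro a b
        constructor
        · rintro ⟨haS, hFab, hbcomp⟩
          by_cases har : a = r
          · subst har
            exact Or.inl ⟨rfl, (compOf_subset hbcomp).1⟩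
          · refine Or.inr ⟨a, ⟨haS, har⟩, mem_compOf_self ⟨haS, har⟩, hFab, ?_⟩
            rw [← key a ⟨haS, har⟩]
            exact hbcomp
        · rintro (⟨rfl, hbS⟩ | ⟨c, hc, haC, hFab, hbcomp⟩)
          · refine ⟨hr, hrmin b hbS, ?_⟩
            have hK : {x | x ∈ S ∧ F x r ∧ x ≠ r} = (∅ : Set V) := by
              ext x
              simp only [Set.mem_setOf_eq, Set.mem_empty_iff_false, iff_false, not_and]
              intro hxS hF hne'
              exact hne' (hP.antisymm x hxS r hr hF (hrmin x hxS))
            rw [hK, Set.diff_empty, compOf_eq_self_of_conn hconn hr]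
            exact hbS
          · have hca : compOf G (S \ {r}) c = compOf G (S \ {r}) a :=
              (compOf_eq_of_mem haC).symm
            rw [hca] at hbcomp
            have haS : a ∈ S := (compOf_subset haC).1
            have har : a ≠ r := (compOf_subset haC).2
            refine ⟨haS, hFab, ?_⟩
            rw [key a ⟨haS, har⟩]
            exact hbcomp

end ETAux
-- PART6: Dominates is transitive and asymmetric; maximal elements
namespace ETAux
variable {V : Type*} [LinearOrder V] {G : SimpleGraph V}

lemma dom_core {u w y : V}
    (h1 : G.neighborSet u \ {w} ⊆ G.neighborSet w \ {u})
    (h2 : G.neighborSet w \ {y} ⊆ G.neighborSet y \ {w})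
    (huw : u ≠ w) (hwy : w ≠ y) (huy : u ≠ y) :
    G.neighborSet u \ {y} ⊆ G.neighborSet y \ {u} := by
  rintro x ⟨hxu, hxy⟩
  simp only [Set.mem_singleton_iff] at hxy
  by_cases hxw : x = w
  · have hxu' : w ∈ G.neighborSet u := hxw ▸ hxu
    have hu2 := h2 ⟨G.adj_symm hxu', huy⟩
    have hy2 := h1 ⟨G.adj_symm hu2.1, Ne.symm hwy⟩
    rw [hxw]
    exact ⟨G.adj_symm hy2.1, Ne.symm huw⟩
  · have hx1 := h1 ⟨hxu, hxw⟩
    have hx2 := h2 ⟨hx1.1, hxy⟩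
    exact ⟨hx2.1, fun h => G.irrefl (h ▸ hxu)⟩

lemma dom_asymm {v w : V} (h1 : Dominates G v w) (h2 : Dominates G w v) : False := by
  rcases h1.2 with ss1 | ⟨eq1, lt1⟩ <;> rcases h2.2 with ss2 | ⟨eq2, lt2⟩
  · exact ss1.ne (le_antisymm ss1.1 ss2.1)
  · exact ss1.ne eq2
  · exact ss2.ne eq1
  · exact absurd (lt1.trans lt2) (lt_irrefl _)

lemma dom_irrefl {v : V} (h : Dominates G v v) : False := h.1 rfl

lemma dom_trans {y w u : V} (h1 : Dominates G y w) (h2 : Dominates G w u) :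
    Dominates G y u := by
  have hwu : w ≠ u := h2.1
  have hyw : y ≠ w := h1.1
  have hyu : y ≠ u := by
    rintro rfl
    exact dom_asymm h1 h2
  have I1 : G.neighborSet u \ {w} ⊆ G.neighborSet w \ {u} := by
    rcases h2.2 with ss | ⟨eq, -⟩
    · exact ss.1
    · exact eq.symm.subset
  have I2 : G.neighborSet w \ {y} ⊆ G.neighborSet y \ {w} := by
    rcases h1.2 with ss | ⟨eq, -⟩
    · exact ss.1
    · exact eq.symm.subset
  have incl : G.neighborSet u \ {y} ⊆ G.neighborSet y \ {u} :=
    dom_core I1 I2 (Ne.symm hwu) (Ne.symm hyw) (Ne.symm hyu)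
  refine ⟨hyu, ?_⟩
  by_cases heq : G.neighborSet y \ {u} ⊆ G.neighborSet u \ {y}
  · -- equality case: both steps must be equalities
    have claim1 : G.neighborSet w \ {u} ⊆ G.neighborSet u \ {w} :=
      dom_core I2 heq (Ne.symm hyw) hyu hwu
    have claim2 : G.neighborSet y \ {w} ⊆ G.neighborSet w \ {y} :=
      dom_core heq I1 hyu (Ne.symm hwu) hyw
    have e2 : G.neighborSet u \ {w} = G.neighborSet w \ {u} :=
      le_antisymm I1 claim1
    have e1 : G.neighborSet w \ {y} = G.neighborSet y \ {w} :=
      le_antisymm I2 claim2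
    have hlt2 : u < w := by
      rcases h2.2 with ss | ⟨-, lt⟩
      · exact absurd e2 ss.ne
      · exact lt
    have hlt1 : w < y := by
      rcases h1.2 with ss | ⟨-, lt⟩
      · exact absurd e1 ss.ne
      · exact lt
    exact Or.inr ⟨le_antisymm heq incl, hlt2.trans hlt1⟩
  · exact Or.inl ⟨incl, heq⟩

lemma exists_dom_max [Finite V] {D : Set V} (hne : D.Nonempty) :
    ∃ m ∈ D, ∀ y ∈ D, ¬ Dominates G y m := by
  obtain ⟨m, hmD, hmax⟩ := Set.Finite.exists_maximalFor
    (fun m => Set.ncard {z | Dominates G m z}) D (Set.toFinite D) hne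
  refine ⟨m, hmD, ?_⟩
  intro y hyD hdom
  have hsub : {z | Dominates G m z} ⊂ {z | Dominates G y z} := by
    constructor
    · intro z hz
      exact dom_trans hdom hz
    · intro hrev
      exact dom_irrefl (hrev (hdom : m ∈ {z | Dominates G y z}))
  have := Set.ncard_lt_ncard hsub (Set.toFinite _)
  exact absurd (hmax hyD (le_of_lt this)) (not_le.2 this)

end ETAux
-- PART7: main theorem
open ETAux

/-- If `T` is a minimum-depth elimination tree of connected `G` in which
some vertex is dominated by one of its descendants, then there exists a minimum-depth
elimination tree of `G` of strictly greater score. -/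
theorem exists_elimTree_score_gt {V : Type*} [Fintype V] [LinearOrder V]
    {G : SimpleGraph V} (hG : G.Connected) {r : V} {anc : V → V → Prop}
    (hT : IsElimTree G Set.univ r anc) (hmin : ancDepth anc Set.univ = treedepth G)
    (hdom : ∃ u w, anc u w ∧ Dominates G w u) :
    ∃ (r' : V) (anc' : V → V → Prop),
      IsElimTree G Set.univ r' anc' ∧ ancDepth anc' Set.univ = treedepth G ∧
      score G anc < score G anc' := by
  classical
  haveI : Nonempty V := hG.nonempty
  have hconnU : SetConn G (Set.univ : Set V) := setConn_univ hG
  -- the minimal dominated vertex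
  set Tfilter : Finset V :=
    Finset.univ.filter (fun u => ∃ w, anc u w ∧ Dominates G w u) with hTfilter
  set f : V → Lex (ℕ × V) := fun u => toLex (Set.ncard {a | anc a u}, u) with hf
  have hTne : Tfilter.Nonempty := by
    obtain ⟨u, w, h1, h2⟩ := hdom
    exact ⟨u, Finset.mem_filter.2 ⟨Finset.mem_univ u, w, h1, h2⟩⟩
  obtain ⟨p, hp⟩ := Finset.min_of_nonempty (hTne.image f)
  obtain ⟨uu, huu, hfuu⟩ := Finset.mem_image.1 (Finset.mem_of_min hp)
  have hDne : {y | anc uu y ∧ Dominates G y uu}.Nonempty := by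
    obtain ⟨-, y0, h1, h2⟩ := Finset.mem_filter.1 huu
    exact ⟨y0, h1, h2⟩
  obtain ⟨w, hwD, hwmax⟩ := exists_dom_max (G := G) hDne
  obtain ⟨hancuw, hdomwu⟩ := hwD
  have hwu : w ≠ uu := hdomwu.1
  have hancuu : anc uu uu := et_refl hT uu trivial
  have hnotwu : ¬ anc w uu := fun h => hwu (et_antisymm hT w uu h hancuw)
  -- the swap
  set σ : Equiv.Perm V := Equiv.swap uu w with hσdef
  have hσu : σ uu = w := Equiv.swap_apply_left uu w
  have hσw : σ w = uu := Equiv.swap_apply_right uu w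
  have hσo : ∀ a, a ≠ uu → a ≠ w → σ a = a := fun a h1 h2 =>
    Equiv.swap_apply_of_ne_of_ne h1 h2
  set F : V → V → Prop := fun a b => anc (σ a) (σ b) with hF
  have hdomsub : G.neighborSet uu \ {w} ⊆ G.neighborSet w \ {uu} := by
    rcases hdomwu.2 with ss | ⟨eq, -⟩
    · exact ss.1
    · exact eq.symm.subset
  have covaux1 : ∀ y, y ≠ uu → y ≠ w → G.Adj uu y → (anc w y ∨ anc y w) := by
    intro y hyu hyw hadj
    have h := hdomsub ⟨hadj, hyw⟩
    exact et_covers hT w trivial y trivial h.1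
  have covaux2 : ∀ y, y ≠ uu → y ≠ w → G.Adj w y → (anc uu y ∨ anc y uu) := by
    intro y hyu hyw hadj
    rcases et_covers hT w trivial y trivial hadj with h | h
    · exact Or.inl (et_trans hT uu w y hancuw h)
    · rcases et_chain hT y uu w h hancuw with h2 | h2
      · exact Or.inr h2
      · exact Or.inl h2
  have Fprops : FProps G F Set.univ := by
    refine ⟨fun a _ => et_refl hT (σ a) trivial,
      fun a _ b _ c _ hab hbc => et_trans hT _ _ _ hab hbc,
      fun a _ b _ hab hba => σ.injective (et_antisymm hT _ _ hab hba),
      fun a _ b _ v _ h1 h2 => et_chain hT _ _ _ h1 h2, ?_⟩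
    intro x _ y _ hadj
    show anc (σ x) (σ y) ∨ anc (σ y) (σ x)
    by_cases hxu : x = uu
    · rw [hxu] at hadj ⊢
      by_cases hyu : y = uu
      · rw [hyu] at hadj; exact absurd rfl hadj.ne
      · by_cases hyw : y = w
        · rw [hyw, hσu, hσw]; exact Or.inr hancuw
        · rw [hσu, hσo y hyu hyw]; exact covaux1 y hyu hyw hadj
    · by_cases hxw : x = w
      · rw [hxw] at hadj ⊢
        by_cases hyu : y = uu
        · rw [hyu, hσu, hσw]; exact Or.inl hancuw
        · by_cases hyw : y = w
          · rw [hyw] at hadj; exact absurd rfl hadj.ne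
          · rw [hσw, hσo y hyu hyw]; exact covaux2 y hyu hyw hadj
      · rw [hσo x hxu hxw]
        by_cases hyu : y = uu
        · rw [hyu] at hadj ⊢
          rw [hσu]; exact (covaux1 x hxu hxw hadj.symm).symm
        · by_cases hyw : y = w
          · rw [hyw] at hadj ⊢
            rw [hσw]; exact (covaux2 x hxu hxw hadj.symm).symm
          · rw [hσo y hyu hyw]; exact et_covers hT x trivial y trivial hadj
  -- the compressed swapped tree
  set anc1 : V → V → Prop := cAnc (G := G) F Set.univ with hanc1
  set r' : V := Fmin F Set.univ with hr'
  have hT' : IsElimTree G Set.univ r' anc1 :=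
    compress_aux (Set.ncard (Set.univ : Set V)) Set.univ le_rfl Set.univ_nonempty
      hconnU Fprops
  -- σ maps the cone of uu to itself
  have hσA : ∀ a, anc uu (σ a) ↔ anc uu a := by
    intro a
    by_cases hau : a = uu
    · rw [hau, hσu]; exact ⟨fun _ => hancuu, fun _ => hancuw⟩
    · by_cases haw : a = w
      · rw [haw, hσw]; exact ⟨fun _ => hancuw, fun _ => hancuu⟩
      · rw [hσo a hau haw]
  -- key1 : outside the cone of uu the tree is unchanged (descendants)
  have key1 : ∀ x, ¬ anc uu x → ∀ b, (anc1 x b ↔ anc x b) := by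
    intro x hx b
    have hxu : x ≠ uu := fun h => hx (h ▸ hancuu)
    have hxw : x ≠ w := fun h => hx (h ▸ hancuw)
    have hσx : σ x = x := hσo x hxu hxw
    have hKeq : {s | s ∈ (Set.univ : Set V) ∧ F s x ∧ s ≠ x} =
        {a | anc a x ∧ a ≠ x} := by
      ext s
      simp only [Set.mem_setOf_eq, Set.mem_univ, true_and]
      constructor
      · rintro ⟨hFs, hsx⟩
        refine ⟨?_, hsx⟩
        have h' : anc (σ s) (σ x) := hFs
        rw [hσx] at h'
        by_cases hsu : s = uu
        · rw [hsu, hσu] at h'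
          rw [hsu]
          exact et_trans hT _ _ _ hancuw h'
        · by_cases hsw : s = w
          · rw [hsw, hσw] at h'
            exact absurd h' hx
          · rwa [hσo s hsu hsw] at h'
      · rintro ⟨has, hsx⟩
        refine ⟨?_, hsx⟩
        show anc (σ s) (σ x)
        rw [hσx]
        by_cases hsu : s = uu
        · rw [hsu] at has
          exact absurd has hx
        · by_cases hsw : s = w
          · rw [hsw] at has
            exact absurd (et_trans hT _ _ _ hancuw has) hx
          · rwa [hσo s hsu hsw]
    have hcone := et_cone hT hconnU x trivial
    constructor
    · rintro ⟨-, hFs, hb⟩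
      rw [hKeq, hcone] at hb
      exact hb
    · intro hab
      refine ⟨trivial, ?_, ?_⟩
      · show anc (σ x) (σ b)
        rw [hσx]
        by_cases hbu : b = uu
        · rw [hbu, hσu]
          rw [hbu] at hab
          exact et_trans hT _ _ _ hab hancuw
        · by_cases hbw : b = w
          · rw [hbw, hσw]
            rw [hbw] at hab
            rcases et_chain hT x uu w hab hancuw with h | h
            · exact h
            · exact absurd h hx
          · rw [hσo b hbu hbw]; exact hab
      · rw [hKeq, hcone]; exact hab
  -- key1' : outside the cone of uu the tree is unchanged (ancestors)
  have key1' : ∀ x, ¬ anc uu x → ∀ a, (anc1 a x ↔ anc a x) := by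
    intro x hx a
    have hxu : x ≠ uu := fun h => hx (h ▸ hancuu)
    have hxw : x ≠ w := fun h => hx (h ▸ hancuw)
    have hσx : σ x = x := hσo x hxu hxw
    constructor
    · intro h
      obtain ⟨-, hFs, hcomp⟩ := h
      have hua : ¬ anc uu a := by
        intro hua'
        have h' : anc (σ a) (σ x) := hFs
        rw [hσx] at h'
        by_cases hau : a = uu
        · rw [hau, hσu] at h'
          exact hx (et_trans hT _ _ _ hancuw h')
        · by_cases haw : a = w
          · rw [haw, hσw] at h'
            exact hx h'
          · rw [hσo a hau haw] at h'
            exact hx (et_trans hT _ _ _ hua' h')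
      exact (key1 a hua x).1 ⟨trivial, hFs, hcomp⟩
    · intro hax
      have hua : ¬ anc uu a := fun h => hx (et_trans hT uu a x h hax)
      exact (key1 a hua x).2 hax
  -- key2b : w is an anc1-ancestor of everything in the cone of uu
  have hconeu := et_cone hT hconnU uu trivial
  have hwA : w ∈ compOf G (Set.univ \ {a | anc a uu ∧ a ≠ uu}) uu := by
    rw [hconeu]; exact hancuw
  have key2b : ∀ x, anc uu x → anc1 w x := by
    intro x hx
    have hKw : {s | s ∈ (Set.univ : Set V) ∧ F s w ∧ s ≠ w} =
        {a | anc a uu ∧ a ≠ uu} := by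
      ext s
      simp only [Set.mem_setOf_eq, Set.mem_univ, true_and]
      constructor
      · rintro ⟨hFs, hsw⟩
        have h' : anc (σ s) (σ w) := hFs
        rw [hσw] at h'
        by_cases hsu : s = uu
        · rw [hsu, hσu] at h'
          exact absurd h' hnotwu
        · rw [hσo s hsu hsw] at h'
          exact ⟨h', hsu⟩
      · rintro ⟨has, hsu⟩
        by_cases hsw : s = w
        · rw [hsw] at has
          exact absurd has hnotwu
        · refine ⟨?_, hsw⟩
          show anc (σ s) (σ w)
          rw [hσw, hσo s hsu hsw]
          exact has
    refine ⟨trivial, ?_, ?_⟩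
    · show anc (σ w) (σ x)
      rw [hσw]
      exact (hσA x).2 hx
    · rw [hKw, compOf_eq_of_mem hwA, hconeu]
      exact hx
  -- key3 : w is not dominated by any of its new descendants
  have key3 : ¬ ∃ y, anc1 w y ∧ Dominates G y w := by
    rintro ⟨y, hy1, hy2⟩
    obtain ⟨-, hFs, -⟩ := hy1
    have hFs' : anc uu (σ y) := by rw [← hσw]; exact hFs
    by_cases hyu : y = uu
    · rw [hyu] at hy2
      exact dom_asymm hy2 hdomwu
    · by_cases hyw : y = w
      · exact hy2.1 hyw
      · rw [hσo y hyu hyw] at hFs'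
        exact hwmax y ⟨hFs', dom_trans hy2 hdomwu⟩ hy2
  -- depth of the new tree
  have hsubF : ∀ x, {a | anc1 a x} ⊆ σ ⁻¹' {a | anc a (σ x)} := by
    intro x a ha
    obtain ⟨-, hFs, -⟩ := ha
    exact hFs
  have hdle : ∀ x, Set.ncard {a | anc1 a x} ≤ Set.ncard {a | anc a (σ x)} := by
    intro x
    have h1 : Set.ncard {a | anc1 a x} ≤ Set.ncard (σ ⁻¹' {a | anc a (σ x)}) :=
      Set.ncard_le_ncard (hsubF x) (Set.toFinite _)
    have h2 : σ ⁻¹' {a | anc a (σ x)} = σ.symm '' {a | anc a (σ x)} := by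
      rw [Equiv.image_eq_preimage_symm]
      simp
    rw [h2, Set.ncard_image_of_injective _ σ.symm.injective] at h1
    exact h1
  have hdepth1 : ancDepth anc1 Set.univ ≤ ancDepth anc Set.univ := by
    apply csSup_le
    · exact (Set.univ_nonempty).image _
    · rintro d ⟨x, -, rfl⟩
      refine le_trans (hdle x) (le_csSup (Set.Finite.bddAbove (Set.toFinite _)) ?_)
      exact ⟨σ x, trivial, rfl⟩
  have hdepth2 : treedepth G ≤ ancDepth anc1 Set.univ := by
    apply Nat.sInf_le
    exact ⟨⟨anc1, fun v => et_refl hT' v trivial, et_trans hT', et_antisymm hT',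
      et_chain hT', fun x y h => et_covers hT' x trivial y trivial h⟩, rfl⟩
  refine ⟨r', anc1, hT', le_antisymm (hmin ▸ hdepth1) hdepth2, ?_⟩
  -- score comparison
  have hpval : p = toLex (Set.ncard {a | anc a uu}, uu) := hfuu.symm
  have hlt : ∀ q ∈ (Finset.univ.filter
      (fun u => ∃ w, anc1 u w ∧ Dominates G w u)).image
      (fun u => toLex (Set.ncard {a | anc1 a u}, u)), p < q := by
    intro q hq
    obtain ⟨x, hxf, rfl⟩ := Finset.mem_image.1 hq
    obtain ⟨-, y, hxy, hdomyx⟩ := Finset.mem_filter.1 hxf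
    by_cases hxA : anc uu x
    · rcases eq_or_ne x w with rfl | hxw
      · exact absurd ⟨y, hxy, hdomyx⟩ key3
      · -- x is strictly deeper than uu in the new tree
        have hstrict : insert w (insert x {a | anc a uu ∧ a ≠ uu}) ⊆
            {a | anc1 a x} := by
          intro a ha
          rcases Set.mem_insert_iff.1 ha with haw | ha2
          · rw [haw]; exact key2b x hxA
          · rcases Set.mem_insert_iff.1 ha2 with hax | ⟨h1, h2⟩
            · rw [hax]; exact et_refl hT' x trivial
            · have hua : ¬ anc uu a := fun h => h2 (et_antisymm hT a uu h1 h)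
              exact (key1 a hua x).2 (et_trans hT a uu x h1 hxA)
        have hxnot : x ∉ {a | anc a uu ∧ a ≠ uu} := by
          rintro ⟨h1, h2⟩
          exact h2 (et_antisymm hT x uu h1 hxA)
        have hwnot : w ∉ insert x {a | anc a uu ∧ a ≠ uu} := by
          intro h
          rcases Set.mem_insert_iff.1 h with hwx | ⟨h1, -⟩
          · exact hxw hwx.symm
          · exact hnotwu h1
        have hcard1 : Set.ncard (insert w (insert x {a | anc a uu ∧ a ≠ uu})) =
            Set.ncard {a | anc a uu ∧ a ≠ uu} + 2 := by
          rw [Set.ncard_insert_of_notMem hwnot (Set.toFinite _),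
            Set.ncard_insert_of_notMem hxnot (Set.toFinite _)]
        have hcard2 : Set.ncard {a | anc a uu} =
            Set.ncard {a | anc a uu ∧ a ≠ uu} + 1 := by
          have : {a | anc a uu} = insert uu {a | anc a uu ∧ a ≠ uu} := by
            ext a
            simp only [Set.mem_setOf_eq, Set.mem_insert_iff]
            constructor
            · intro h
              by_cases hau : a = uu
              · exact Or.inl hau
              · exact Or.inr ⟨h, hau⟩
            · rintro (hau | ⟨h, -⟩)
              · rw [hau]; exact hancuu
              · exact h
          rw [this, Set.ncard_insert_of_notMem (by rintro ⟨-, h⟩; exact h rfl)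
            (Set.toFinite _)]
        have hge : Set.ncard {a | anc a uu} < Set.ncard {a | anc1 a x} := by
          have := Set.ncard_le_ncard hstrict (Set.toFinite _)
          omega
        rw [hpval]
        rw [Prod.Lex.lt_iff]
        exact Or.inl hge
    · -- x is outside the cone: same position as in T
      have hset : {a | anc1 a x} = {a | anc a x} := Set.ext (key1' x hxA)
      have hxT : x ∈ Tfilter :=
        Finset.mem_filter.2 ⟨Finset.mem_univ x, y, (key1 x hxA y).1 hxy, hdomyx⟩
      have hle : (↑p : WithTop (Lex (ℕ × V))) ≤ ↑(f x) := by
        rw [← hp]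
        exact Finset.min_le (Finset.mem_image.2 ⟨x, hxT, rfl⟩)
      have hle' : p ≤ f x := WithTop.coe_le_coe.1 hle
      have hne : p ≠ f x := by
        intro h
        have : uu = x := by
          have := hpval.symm.trans h
          have h2 := congrArg (fun t => (ofLex t).2) this
          exact h2
        exact hxA (this ▸ hancuu)
      have : toLex (Set.ncard {a | anc1 a x}, x) = f x := by rw [hset]
      rw [this]
      exact lt_of_le_of_ne hle' hne
  have hscore : score G anc = ↑p := by
    rw [score, ← hf, ← hTfilter, hp]
  rw [hscore]
  rcases hq : (Finset.univ.filter
      (fun u => ∃ w, anc1 u w ∧ Dominates G w u)).image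
      (fun u => toLex (Set.ncard {a | anc1 a u}, u)) |>.min with _ | q
  · rw [score]
    rw [hq]
    exact WithTop.coe_lt_top p
  · rw [score, hq]
    exact WithTop.coe_lt_coe.2 (hlt q (Finset.mem_of_min hq))
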